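/- Let D be the sum of k i.i.d. random variables each equal to +1 with probability p and −1 with probability 1−p, where 1/4 < p < 1/2. Then E[D · 1{D ≥ 0}] ≤ C (1−2p)^{−2} k^{−1/2} (2√(p(1−p)))^k for an absolute constant C independent of k and p. -/

import Mathlib

open Finset

private lemma cB_sq (n : ℕ) : (3 * n + 1) * (Nat.centralBinom n) ^ 2 ≤ 16 ^ n := by
  induction n with
  | zero => simp [Nat.centralBinom]
  | succ n ih =>
    have h : ((n + 1) * Nat.centralBinom (n + 1)) ^ 2
        = (2 * (2 * n + 1) * Nat.centralBinom n) ^ 2 := by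
      rw [Nat.succ_mul_centralBinom_succ]
    have hpoly : (3 * n + 4) * (4 * (2 * n + 1) ^ 2) ≤ 16 * (n + 1) ^ 2 * (3 * n + 1) := by
      nlinarith
    have key : (n + 1) ^ 2 * ((3 * (n + 1) + 1) * (Nat.centralBinom (n + 1)) ^ 2)
        ≤ (n + 1) ^ 2 * 16 ^ (n + 1) := by
      calc (n + 1) ^ 2 * ((3 * (n + 1) + 1) * (Nat.centralBinom (n + 1)) ^ 2)
          = (3 * n + 4) * ((n + 1) * Nat.centralBinom (n + 1)) ^ 2 := by ring
        _ = (3 * n + 4) * (2 * (2 * n + 1) * Nat.centralBinom n) ^ 2 := by rw [h]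
        _ = (3 * n + 4) * (4 * (2 * n + 1) ^ 2) * (Nat.centralBinom n) ^ 2 := by ring
        _ ≤ 16 * (n + 1) ^ 2 * (3 * n + 1) * (Nat.centralBinom n) ^ 2 :=
            Nat.mul_le_mul_right _ hpoly
        _ = 16 * (n + 1) ^ 2 * ((3 * n + 1) * (Nat.centralBinom n) ^ 2) := by ring
        _ ≤ 16 * (n + 1) ^ 2 * 16 ^ n := Nat.mul_le_mul_left _ ih
        _ = (n + 1) ^ 2 * 16 ^ (n + 1) := by ring
    exact Nat.le_of_mul_le_mul_left key (by positivity)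

private lemma choose_sq (k j : ℕ) : k * (Nat.choose k j) ^ 2 ≤ 4 ^ k := by
  have hm : Nat.choose k j ≤ Nat.choose k (k / 2) := Nat.choose_le_middle j k
  have h1 : k * (Nat.choose k j) ^ 2 ≤ k * (Nat.choose k (k / 2)) ^ 2 :=
    Nat.mul_le_mul_left _ (Nat.pow_le_pow_left hm 2)
  refine h1.trans ?_
  rcases Nat.even_or_odd k with ⟨n, hn⟩ | ⟨n, hn⟩
  · subst hn
    have h2 : n + n = 2 * n := by ring
    rw [h2]
    have hdiv : 2 * n / 2 = n := by omega
    rw [hdiv]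
    have hc : Nat.choose (2 * n) n = Nat.centralBinom n := rfl
    rw [hc]
    calc 2 * n * Nat.centralBinom n ^ 2 ≤ (3 * n + 1) * Nat.centralBinom n ^ 2 :=
          Nat.mul_le_mul_right _ (by omega)
      _ ≤ 16 ^ n := cB_sq n
      _ = 4 ^ (2 * n) := by rw [pow_mul]; norm_num
  · subst hn
    have hdiv : (2 * n + 1) / 2 = n := by omega
    rw [hdiv]
    set c := Nat.choose (2 * n + 1) n with hc
    have hcb : Nat.centralBinom (n + 1) = 2 * c := by
      have h1 : Nat.centralBinom (n + 1) = Nat.choose (2 * n + 1 + 1) (n + 1) := by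
        unfold Nat.centralBinom
        congr 1
      have h2 : Nat.choose (2 * n + 1 + 1) (n + 1)
          = Nat.choose (2 * n + 1) n + Nat.choose (2 * n + 1) (n + 1) :=
        Nat.choose_succ_succ' (2 * n + 1) n
      have h3 : Nat.choose (2 * n + 1) (n + 1) = Nat.choose (2 * n + 1) n := by
        have := Nat.choose_symm (n := 2 * n + 1) (k := n + 1) (by omega)
        have he : 2 * n + 1 - (n + 1) = n := by omega
        rw [he] at this
        exact this.symm
      rw [h1, h2, h3]
      omega
    have hb := cB_sq (n + 1)
    rw [hcb] at hb
    have hb2 : (3 * (n + 1) + 1) * (2 * c) ^ 2 = 4 * ((3 * n + 4) * c ^ 2) := by ring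
    rw [hb2] at hb
    have h16 : (16 : ℕ) ^ (n + 1) = 4 * (4 * 16 ^ n) := by rw [pow_succ]; ring
    rw [h16] at hb
    have hb3 : (3 * n + 4) * c ^ 2 ≤ 4 * 16 ^ n := Nat.le_of_mul_le_mul_left hb (by norm_num)
    have h4 : (4 : ℕ) ^ (2 * n + 1) = 4 * 16 ^ n := by
      rw [pow_succ, pow_mul]; norm_num; ring
    rw [h4]
    calc (2 * n + 1) * c ^ 2 ≤ (3 * n + 4) * c ^ 2 := Nat.mul_le_mul_right _ (by omega)
      _ ≤ 4 * 16 ^ n := hb3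

private lemma choose_sqrt (k j : ℕ) : (Nat.choose k j : ℝ) * Real.sqrt k ≤ 2 ^ k := by
  have h : ((k : ℝ)) * (Nat.choose k j : ℝ) ^ 2 ≤ (4 : ℝ) ^ k := by
    exact_mod_cast choose_sq k j
  have hs := Real.sqrt_le_sqrt h
  rw [Real.sqrt_mul (by positivity), Real.sqrt_sq (by positivity)] at hs
  have h4 : Real.sqrt ((4 : ℝ) ^ k) = 2 ^ k := by
    have : (4 : ℝ) ^ k = (2 ^ k) ^ 2 := by
      rw [← pow_mul, mul_comm k 2, pow_mul]; norm_num
    rw [this, Real.sqrt_sq (by positivity)]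
  rw [h4] at hs
  linarith [hs]

theorem stmt9 :
    ∃ C : ℝ, 0 < C ∧ ∀ (k : ℕ), 1 ≤ k → ∀ (p : ℝ), 1 / 4 < p → p < 1 / 2 →
      (∑ j ∈ Finset.range (k + 1),
          (if k ≤ 2 * j then (2 * (j : ℝ) - k) else 0) *
            (Nat.choose k j : ℝ) * p ^ j * (1 - p) ^ (k - j))
        ≤ C * ((1 - 2 * p) ^ 2)⁻¹ * (Real.sqrt k)⁻¹ *
            (2 * Real.sqrt (p * (1 - p))) ^ k := by
  refine ⟨4, by norm_num, ?_⟩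
  intro k hk p hp1 hp2
  have hp0 : (0 : ℝ) < p := by linarith
  have h1p : (0 : ℝ) < 1 - p := by linarith
  have h2p : (0 : ℝ) < 1 - 2 * p := by linarith
  set a := Real.sqrt (p * (1 - p)) with ha
  set s := Real.sqrt (p / (1 - p)) with hs
  have ha0 : 0 ≤ a := Real.sqrt_nonneg _
  have hs0 : 0 ≤ s := Real.sqrt_nonneg _
  have has : a * s = p := by
    rw [ha, hs, ← Real.sqrt_mul (by positivity)]
    rw [show p * (1 - p) * (p / (1 - p)) = p ^ 2 by field_simp]
    exact Real.sqrt_sq hp0.le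
  have ha2 : a ^ 2 = p * (1 - p) := Real.sq_sqrt (by positivity)
  have hs2 : s ^ 2 = p / (1 - p) := Real.sq_sqrt (by positivity)
  have hslt : p / (1 - p) < 1 := by rw [div_lt_one h1p]; linarith
  have hs1 : s < 1 := by nlinarith [sq_nonneg (s - 1)]
  have hk0 : (0 : ℝ) < Real.sqrt k :=
    Real.sqrt_pos.2 (by exact_mod_cast Nat.pos_of_ne_zero (by omega))
  set Q : ℝ := (2 * a) ^ k / Real.sqrt k with hQ
  have hQ0 : 0 ≤ Q := by positivity
  have hgeom : HasSum (fun n : ℕ => (n : ℝ) * s ^ n) (s / (1 - s) ^ 2) :=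
    hasSum_coe_mul_geometric_of_norm_lt_one
      (by rwa [Real.norm_eq_abs, abs_of_nonneg hs0])
  have step1 : (∑ j ∈ Finset.range (k + 1),
        (if k ≤ 2 * j then (2 * (j : ℝ) - k) else 0) *
          (Nat.choose k j : ℝ) * p ^ j * (1 - p) ^ (k - j))
      ≤ ∑ j ∈ Finset.range (k + 1),
        (if k ≤ 2 * j then ((2 * j - k : ℕ) : ℝ) * s ^ (2 * j - k) else 0) * Q := by
    apply Finset.sum_le_sum
    intro j hj
    rw [Finset.mem_range] at hj
    have hjk : j ≤ k := by omega
    split_ifs with hc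
    · have hd : k - j + (2 * j - k) = j := by omega
      have hk2 : 2 * (k - j) + (2 * j - k) = k := by omega
      have hpq : p ^ j * (1 - p) ^ (k - j) = a ^ k * s ^ (2 * j - k) := by
        have hak : a ^ k = (p * (1 - p)) ^ (k - j) * a ^ (2 * j - k) := by
          conv_lhs => rw [← hk2]
          rw [pow_add, pow_mul, ha2]
        have hpj : p ^ j = p ^ (k - j) * p ^ (2 * j - k) := by
          rw [← pow_add, hd]
        have haspow : a ^ (2 * j - k) * s ^ (2 * j - k) = p ^ (2 * j - k) := by
          rw [← mul_pow, has]
        calc p ^ j * (1 - p) ^ (k - j)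
            = p ^ (k - j) * (1 - p) ^ (k - j) * p ^ (2 * j - k) := by rw [hpj]; ring
          _ = p ^ (k - j) * (1 - p) ^ (k - j) * (a ^ (2 * j - k) * s ^ (2 * j - k)) := by
              rw [haspow]
          _ = (p * (1 - p)) ^ (k - j) * a ^ (2 * j - k) * s ^ (2 * j - k) := by
              rw [mul_pow p (1 - p)]; ring
          _ = a ^ k * s ^ (2 * j - k) := by rw [← hak]
      have hcast : (2 * (j : ℝ) - k) = ((2 * j - k : ℕ) : ℝ) := by
        rw [Nat.cast_sub hc]; push_cast; ring
      rw [hcast]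
      set d := 2 * j - k with hdd
      have hC : (Nat.choose k j : ℝ) ≤ 2 ^ k / Real.sqrt k := by
        rw [le_div_iff₀ hk0]; exact choose_sqrt k j
      calc ((d : ℕ) : ℝ) * (Nat.choose k j : ℝ) * p ^ j * (1 - p) ^ (k - j)
          = ((d : ℕ) : ℝ) * (Nat.choose k j : ℝ) * (p ^ j * (1 - p) ^ (k - j)) := by ring
        _ = ((d : ℕ) : ℝ) * (Nat.choose k j : ℝ) * (a ^ k * s ^ d) := by rw [hpq]
        _ = ((d : ℕ) : ℝ) * s ^ d * ((Nat.choose k j : ℝ) * a ^ k) := by ring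
        _ ≤ ((d : ℕ) : ℝ) * s ^ d * ((2 ^ k / Real.sqrt k) * a ^ k) := by
            apply mul_le_mul_of_nonneg_left
            · exact mul_le_mul_of_nonneg_right hC (by positivity)
            · positivity
        _ = ((d : ℕ) : ℝ) * s ^ d * Q := by
            rw [hQ, mul_pow]; ring
    · simp
  have step2 : (∑ j ∈ Finset.range (k + 1),
        (if k ≤ 2 * j then ((2 * j - k : ℕ) : ℝ) * s ^ (2 * j - k) else 0) * Q)
      = (∑ j ∈ Finset.range (k + 1),
        (if k ≤ 2 * j then ((2 * j - k : ℕ) : ℝ) * s ^ (2 * j - k) else 0)) * Q :=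
    (Finset.sum_mul _ _ _).symm
  have step3 : (∑ j ∈ Finset.range (k + 1),
        (if k ≤ 2 * j then ((2 * j - k : ℕ) : ℝ) * s ^ (2 * j - k) else 0))
      ≤ s / (1 - s) ^ 2 := by
    have hsum : (∑ j ∈ Finset.range (k + 1),
          (if k ≤ 2 * j then ((2 * j - k : ℕ) : ℝ) * s ^ (2 * j - k) else 0))
        = ∑ d ∈ ((Finset.range (k + 1)).filter (fun j => k ≤ 2 * j)).image
            (fun j => 2 * j - k), ((d : ℝ) * s ^ d) := by
      rw [Finset.sum_image (by
        intro x hx y hy hxy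
        simp only [Finset.coe_filter, Finset.mem_coe, Set.mem_setOf_eq, Finset.mem_filter, Finset.mem_range] at hx hy hxy
        omega)]
      rw [Finset.sum_filter]
    rw [hsum]
    calc _ ≤ ∑' d : ℕ, ((d : ℝ) * s ^ d) :=
          Summable.sum_le_tsum _ (fun d _ => by positivity) hgeom.summable
      _ = s / (1 - s) ^ 2 := hgeom.tsum_eq
  have step4 : s / (1 - s) ^ 2 ≤ 4 / (1 - 2 * p) ^ 2 := by
    have hfact : (1 - s ^ 2) * (1 - p) = 1 - 2 * p := by
      rw [hs2]; field_simp; ring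
    have h1s : 1 - 2 * p ≤ 2 * (1 - s) := by
      nlinarith [mul_nonneg (sub_nonneg.2 hs1.le) hp0.le,
        mul_nonneg (sub_nonneg.2 hs1.le) (mul_nonneg hs0 hp0.le)]
    have hsq : (1 - 2 * p) ^ 2 ≤ (2 * (1 - s)) ^ 2 := pow_le_pow_left₀ h2p.le h1s 2
    rw [div_le_div_iff₀ (pow_pos (by linarith) 2) (pow_pos h2p 2)]
    nlinarith [hsq, hs1.le, sq_nonneg (1 - 2 * p)]
  calc (∑ j ∈ Finset.range (k + 1),
        (if k ≤ 2 * j then (2 * (j : ℝ) - k) else 0) *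
          (Nat.choose k j : ℝ) * p ^ j * (1 - p) ^ (k - j))
      ≤ (∑ j ∈ Finset.range (k + 1),
        (if k ≤ 2 * j then ((2 * j - k : ℕ) : ℝ) * s ^ (2 * j - k) else 0)) * Q := by
        rw [← step2]; exact step1
    _ ≤ (4 / (1 - 2 * p) ^ 2) * Q :=
        mul_le_mul_of_nonneg_right (step3.trans step4) hQ0
    _ = 4 * ((1 - 2 * p) ^ 2)⁻¹ * (Real.sqrt k)⁻¹ * (2 * a) ^ k := by
        rw [hQ, div_eq_mul_inv]; ring
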